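/- Let X_1, ..., X_N be random variables taking values in finite alphabets whose joint probability mass function factors as p(x^N) = \prod_{i=1}^K f_i(x_{S_i}) for nonnegative functions f_1,...,f_K, where each S_i is a subset of {1,...,N} and x_{S_i} denotes the coordinates indexed by S_i. Form the undirected graph G on vertex set {1,...,N} with an edge between j and j' (j ≠ j') if and only if some S_i contains both j and j'. Let G_1, G_2, G_3 be pairwise disjoint subsets of {1,...,N} such that every path in G from a vertex of G_1 to a vertex of G_3 passes through a vertex of G_2. Then X_{G_1} and X_{G_3} are conditionally independent given X_{G_2}, i.e., the Markov chain X_{G_1} - X_{G_2} - X_{G_3} holds. -/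

import Mathlib

open Finset

/-- The "marginal probability" that the coordinates in `S` take the values prescribed
by `x`, for a joint pmf `p` on a finite product alphabet. -/
noncomputable def eventProb {N : ℕ} {α : Fin N → Type*} [∀ j, Fintype (α j)]
    [∀ j, DecidableEq (α j)]
    (p : (∀ j, α j) → ℝ) (S : Finset (Fin N)) (x : ∀ j, α j) : ℝ :=
  ∑ y : ∀ j, α j, if ∀ j ∈ S, y j = x j then p y else 0

/-- Suppose the joint pmf of `X_1, ..., X_N` factors as a product of
nonnegative functions `f_i`, where `f_i` depends only on the coordinates in `S_i`.
Form the undirected graph `G` on `{1,...,N}` with an edge between distinct `j, j'` iff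
some `S_i` contains both.  If `G₁, G₂, G₃` are pairwise disjoint vertex sets such that
every path (walk) in `G` from `G₁` to `G₃` passes through a vertex of `G₂`, then
`X_{G₁}` and `X_{G₃}` are conditionally independent given `X_{G₂}` (stated in the
cross-multiplication form `p(x_{G₁},x_{G₂},x_{G₃}) p(x_{G₂}) = p(x_{G₁},x_{G₂}) p(x_{G₂},x_{G₃})`). -/
theorem graph_technique_markov
    {N : ℕ} {α : Fin N → Type*} [∀ j, Fintype (α j)] [∀ j, DecidableEq (α j)]
    {K : ℕ} (S : Fin K → Finset (Fin N)) (f : Fin K → (∀ j, α j) → ℝ)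
    (hf0 : ∀ i x, 0 ≤ f i x)
    (hdep : ∀ i x y, (∀ j ∈ S i, x j = y j) → f i x = f i y)
    (p : (∀ j, α j) → ℝ)
    (hfac : ∀ x, p x = ∏ i, f i x)
    (hp1 : ∑ x, p x = 1)
    (G : SimpleGraph (Fin N))
    (hG : ∀ j j', G.Adj j j' ↔ j ≠ j' ∧ ∃ i, j ∈ S i ∧ j' ∈ S i)
    (G₁ G₂ G₃ : Finset (Fin N))
    (h12 : Disjoint G₁ G₂) (h13 : Disjoint G₁ G₃) (h23 : Disjoint G₂ G₃)
    (hsep : ∀ u ∈ G₁, ∀ v ∈ G₃, ∀ w : G.Walk u v, ∃ j ∈ w.support, j ∈ G₂) :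
    ∀ x : ∀ j, α j,
      eventProb p (G₁ ∪ G₂ ∪ G₃) x * eventProb p G₂ x =
        eventProb p (G₁ ∪ G₂) x * eventProb p (G₂ ∪ G₃) x := by
  classical
  -- T : vertices in G₂, or reachable from G₁ without touching G₂
  set T : Fin N → Prop := fun v =>
    v ∈ G₂ ∨ ∃ u ∈ G₁, ∃ w : G.Walk u v, ∀ j ∈ w.support, j ∉ G₂ with hTdef
  have hT1 : ∀ j ∈ G₁, T j := by
    intro j hj
    exact Or.inr ⟨j, hj, SimpleGraph.Walk.nil, by
      intro k hk
      simp only [SimpleGraph.Walk.support_nil, List.mem_singleton] at hk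
      subst hk
      exact Finset.disjoint_left.mp h12 hj⟩
  have hT2 : ∀ j ∈ G₂, T j := fun j hj => Or.inl hj
  have hT3 : ∀ j ∈ G₃, ¬ T j := by
    intro j hj hTj
    rcases hTj with h | ⟨u, hu, w, hw⟩
    · exact Finset.disjoint_left.mp h23 h hj
    · obtain ⟨k, hk, hk2⟩ := hsep u hu j hj w
      exact hw k hk hk2
  -- closure of the reachable part under adjacency (outside G₂)
  have hclose : ∀ a b, T a → a ∉ G₂ → b ∉ G₂ → G.Adj a b → T b := by
    intro a b hTa ha hb hadj
    rcases hTa with h | ⟨u, hu, w, hw⟩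
    · exact absurd h ha
    · refine Or.inr ⟨u, hu, w.concat hadj, ?_⟩
      intro k hk
      rw [SimpleGraph.Walk.support_concat, List.mem_append] at hk
      rcases hk with hk | hk
      · exact hw k hk
      · simp only [List.mem_singleton] at hk; subst hk; exact hb
  -- each factor is supported either inside T, or inside (¬T ∪ G₂)
  have hsplit : ∀ i, (∀ j ∈ S i, T j) ∨ (∀ j ∈ S i, ¬ T j ∨ j ∈ G₂) := by
    intro i
    by_cases hall : ∀ j ∈ S i, T j
    · exact Or.inl hall
    · push_neg at hall
      obtain ⟨b, hb, hTb⟩ := hall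
      refine Or.inr ?_
      intro a ha
      by_contra hcon
      push_neg at hcon
      obtain ⟨hTa, ha2⟩ := hcon
      have hab : a ≠ b := fun h => hTb (h ▸ hTa)
      have hadj : G.Adj a b := (hG a b).mpr ⟨hab, i, ha, hb⟩
      have hbG2 : b ∉ G₂ := fun h => hTb (hT2 b h)
      exact hTb (hclose a b hTa ha2 hbG2 hadj)
  -- split the product
  set Q : Fin K → Prop := fun i => ∀ j ∈ S i, T j with hQdef
  set g : (∀ j, α j) → ℝ := fun y => ∏ i ∈ Finset.univ.filter Q, f i y with hgdef
  set h : (∀ j, α j) → ℝ := fun y =>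
    ∏ i ∈ Finset.univ.filter (fun i => ¬ Q i), f i y with hhdef
  have hpgh : ∀ y, p y = g y * h y := by
    intro y
    rw [hfac]
    exact (Finset.prod_filter_mul_prod_filter_not Finset.univ Q _).symm
  have hgdep : ∀ y z : ∀ j, α j, (∀ j, T j → y j = z j) → g y = g z := by
    intro y z hyz
    refine Finset.prod_congr rfl ?_
    intro i hi
    rw [Finset.mem_filter] at hi
    exact hdep i y z (fun j hj => hyz j (hi.2 j hj))
  have hhdep : ∀ y z : ∀ j, α j, (∀ j, (¬ T j ∨ j ∈ G₂) → y j = z j) → h y = h z := by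
    intro y z hyz
    refine Finset.prod_congr rfl ?_
    intro i hi
    rw [Finset.mem_filter] at hi
    have hi2 : ∀ j ∈ S i, ¬ T j ∨ j ∈ G₂ := (hsplit i).resolve_left hi.2
    exact hdep i y z (fun j hj => hyz j (hi2 j hj))
  intro x
  -- combine two indicators into one
  have key : ∀ (P R : Prop) [Decidable P] [Decidable R] (A B : ℝ),
      (if P then A else 0) * (if R then B else 0) = if P ∧ R then A * B else 0 := by
    intro P R _ _ A B
    by_cases hP : P <;> by_cases hR : R <;> simp [hP, hR]
  -- the main pointwise swap identity
  have main : ∀ y z y' z' : ∀ j, α j,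
      (∀ j, T j → y' j = y j) → (∀ j, ¬ T j → y' j = z j) →
      (∀ j, T j → z' j = z j) → (∀ j, ¬ T j → z' j = y j) →
      (if ∀ j ∈ G₁ ∪ G₂ ∪ G₃, y j = x j then p y else 0) *
        (if ∀ j ∈ G₂, z j = x j then p z else 0) =
      (if ∀ j ∈ G₁ ∪ G₂, y' j = x j then p y' else 0) *
        (if ∀ j ∈ G₂ ∪ G₃, z' j = x j then p z' else 0) := by
    intro y z y' z' hy'T hy'nT hz'T hz'nT
    have hiff : ((∀ j ∈ G₁ ∪ G₂ ∪ G₃, y j = x j) ∧ (∀ j ∈ G₂, z j = x j)) ↔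
        ((∀ j ∈ G₁ ∪ G₂, y' j = x j) ∧ (∀ j ∈ G₂ ∪ G₃, z' j = x j)) := by
      constructor
      · rintro ⟨h1, h2⟩
        constructor
        · intro j hj
          have hTj : T j := by
            rcases Finset.mem_union.mp hj with hj | hj
            · exact hT1 j hj
            · exact hT2 j hj
          rw [hy'T j hTj]
          exact h1 j (Finset.mem_union.mpr (Or.inl hj))
        · intro j hj
          rcases Finset.mem_union.mp hj with hj | hj
          · rw [hz'T j (hT2 j hj)]; exact h2 j hj
          · rw [hz'nT j (hT3 j hj)]
            exact h1 j (Finset.mem_union.mpr (Or.inr hj))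
      · rintro ⟨h1, h2⟩
        constructor
        · intro j hj
          rcases Finset.mem_union.mp hj with hj' | hj'
          · have hTj : T j := by
              rcases Finset.mem_union.mp hj' with hj'' | hj''
              · exact hT1 j hj''
              · exact hT2 j hj''
            rw [← hy'T j hTj]
            exact h1 j hj'
          · rw [← hz'nT j (hT3 j hj')]
            exact h2 j (Finset.mem_union.mpr (Or.inr hj'))
        · intro j hj
          rw [← hz'T j (hT2 j hj)]
          exact h2 j (Finset.mem_union.mpr (Or.inl hj))
    rw [key, key]
    by_cases hc : (∀ j ∈ G₁ ∪ G₂ ∪ G₃, y j = x j) ∧ (∀ j ∈ G₂, z j = x j)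
    · rw [if_pos hc, if_pos (hiff.mp hc)]
      have hG2y : ∀ j ∈ G₂, y j = x j := fun j hj =>
        hc.1 j (Finset.mem_union.mpr (Or.inl (Finset.mem_union.mpr (Or.inr hj))))
      have hG2z : ∀ j ∈ G₂, z j = x j := hc.2
      have e1 : g y' = g y := hgdep y' y hy'T
      have e2 : g z' = g z := hgdep z' z hz'T
      have e3 : h y' = h z := by
        refine hhdep y' z ?_
        intro j hj
        rcases hj with hj | hj
        · exact hy'nT j hj
        · rw [hy'T j (hT2 j hj), hG2y j hj, hG2z j hj]
      have e4 : h z' = h y := by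
        refine hhdep z' y ?_
        intro j hj
        rcases hj with hj | hj
        · exact hz'nT j hj
        · rw [hz'T j (hT2 j hj), hG2z j hj, hG2y j hj]
      rw [hpgh y, hpgh z, hpgh y', hpgh z', e1, e2, e3, e4]
      ring
    · rw [if_neg hc, if_neg (fun h' => hc (hiff.mpr h'))]
  -- the swap bijection
  let σ : (∀ j, α j) × (∀ j, α j) ≃ (∀ j, α j) × (∀ j, α j) :=
    { toFun := fun yz => (fun j => if T j then yz.1 j else yz.2 j,
                          fun j => if T j then yz.2 j else yz.1 j)
      invFun := fun yz => (fun j => if T j then yz.1 j else yz.2 j,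
                           fun j => if T j then yz.2 j else yz.1 j)
      left_inv := by
        intro yz
        refine Prod.ext (funext fun j => ?_) (funext fun j => ?_) <;>
          by_cases hj : T j <;> simp [hj]
      right_inv := by
        intro yz
        refine Prod.ext (funext fun j => ?_) (funext fun j => ?_) <;>
          by_cases hj : T j <;> simp [hj] }
  simp only [eventProb]
  rw [Finset.sum_mul_sum, Finset.sum_mul_sum]
  rw [← Fintype.sum_prod_type (f := fun yz : (∀ j, α j) × (∀ j, α j) =>
        (if ∀ j ∈ G₁ ∪ G₂ ∪ G₃, yz.1 j = x j then p yz.1 else 0) *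
        (if ∀ j ∈ G₂, yz.2 j = x j then p yz.2 else 0)),
      ← Fintype.sum_prod_type (f := fun yz : (∀ j, α j) × (∀ j, α j) =>
        (if ∀ j ∈ G₁ ∪ G₂, yz.1 j = x j then p yz.1 else 0) *
        (if ∀ j ∈ G₂ ∪ G₃, yz.2 j = x j then p yz.2 else 0))]
  refine Fintype.sum_equiv σ _ _ ?_
  rintro ⟨y, z⟩
  exact main y z _ _ (fun j hj => by simp [σ, hj]) (fun j hj => by simp [σ, hj])
    (fun j hj => by simp [σ, hj]) (fun j hj => by simp [σ, hj])
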